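/- Let V : M → Q⊗E and W : M' → Q⊗E be isometries, with Q and R single qubits, and let |φ⁰⟩_{M'EX}, |φ¹⟩_{MEX} be arbitrary pure states. Define |ψ⁰⟩ = (V† ⊗ id)(|Φ⁺⟩_{RQ} ⊗ |φ⁰⟩_{M'EX}) and |ψ¹⟩ = (W† ⊗ id)(|Φ⁺⟩_{RQ} ⊗ |φ¹⟩_{MEX}). Then |⟨ψ⁰|ψ¹⟩| ≤ 1/2. -/

import Mathlib

open Matrix
open scoped Classical ComplexOrder

noncomputable def binEnt (x : ℝ) : ℝ := -x * Real.logb 2 x - (1 - x) * Real.logb 2 (1 - x)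

/-- von Neumann entropy (base 2) of a matrix, via eigenvalues (0 if not Hermitian). -/
noncomputable def vnEnt {d : Type*} [Fintype d] [DecidableEq d] (ρ : Matrix d d ℂ) : ℝ :=
  if h : ρ.IsHermitian then ∑ i, -(h.eigenvalues i) * Real.logb 2 (h.eigenvalues i) else 0

/-- Trace norm of a Hermitian matrix (0 if not Hermitian). -/
noncomputable def traceNorm {d : Type*} [Fintype d] [DecidableEq d] (A : Matrix d d ℂ) : ℝ :=
  if h : A.IsHermitian then ∑ i, |h.eigenvalues i| else 0

/-- The old Mathlib `Matrix.PosSemidef.sqrt` (removed since), restated with its old definition. -/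
noncomputable def Matrix.PosSemidef.sqrt {n 𝕜 : Type*} [Fintype n] [DecidableEq n] [RCLike 𝕜]
    {A : Matrix n n 𝕜} (hA : A.PosSemidef) : Matrix n n 𝕜 :=
  hA.1.eigenvectorUnitary.1 * diagonal ((↑) ∘ (√·) ∘ hA.1.eigenvalues) *
    (star hA.1.eigenvectorUnitary : Matrix n n 𝕜)

noncomputable def fidelity {d : Type*} [Fintype d] [DecidableEq d] (ρ σ : Matrix d d ℂ) : ℝ :=
  if hσ : σ.PosSemidef then
    if h : (hσ.sqrt * ρ * hσ.sqrt).IsHermitian then ∑ i, Real.sqrt (h.eigenvalues i) else 0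
  else 0

noncomputable def pdist {d : Type*} [Fintype d] [DecidableEq d] (ρ σ : Matrix d d ℂ) : ℝ :=
  Real.sqrt (1 - (fidelity ρ σ) ^ 2)

def IsState {d : Type*} [Fintype d] [DecidableEq d] (ρ : Matrix d d ℂ) : Prop :=
  ρ.PosSemidef ∧ ρ.trace = 1

/-- partial trace over the second tensor factor -/
noncomputable def ptraceR {a b : Type*} [Fintype b] (ρ : Matrix (a × b) (a × b) ℂ) : Matrix a a ℂ :=
  fun i j => ∑ k, ρ (i, k) (j, k)

/-- partial trace over the first tensor factor -/
noncomputable def ptraceL {a b : Type*} [Fintype a] (ρ : Matrix (a × b) (a × b) ℂ) : Matrix b b ℂ :=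
  fun i j => ∑ k, ρ (k, i) (k, j)

/-- conditional von Neumann entropy H(A|B) of a state on A × B -/
noncomputable def condEnt {a b : Type*} [Fintype a] [Fintype b] [DecidableEq a] [DecidableEq b]
    (ρ : Matrix (a × b) (a × b) ℂ) : ℝ := vnEnt ρ - vnEnt (ptraceL ρ)

/-- computational-basis projector on a qubit -/
noncomputable def Pc (b : Fin 2) : Matrix (Fin 2) (Fin 2) ℂ := fun i j => if i = b ∧ j = b then 1 else 0

/-- Hadamard-basis projector on a qubit -/
noncomputable def Ph (b : Fin 2) : Matrix (Fin 2) (Fin 2) ℂ :=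
  fun i j => (1 / 2 : ℂ) * (-1) ^ ((i : ℕ) * (b : ℕ)) * (-1) ^ ((b : ℕ) * (j : ℕ))

/-- measure the first (qubit) factor with rank-one projectors `P`, storing the outcome
classically in its place -/
noncomputable def cqMeasure {m : Type*} [Fintype m] (P : Fin 2 → Matrix (Fin 2) (Fin 2) ℂ)
    (ρ : Matrix (Fin 2 × m) (Fin 2 × m) ℂ) : Matrix (Fin 2 × m) (Fin 2 × m) ℂ :=
  fun zi z'j => if zi.1 = z'j.1 then ∑ r, ∑ t, (P zi.1) r t * ρ (t, zi.2) (r, z'j.2) else 0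

/-- outer product |ψ⟩⟨ψ| of a vector -/
noncomputable def outer {d : Type*} (ψ : d → ℂ) : Matrix d d ℂ := fun i j => ψ i * (starRingEnd ℂ) (ψ j)



lemma dot_self_eq {n : Type*} [Fintype n] (u : n → ℂ) :
    star u ⬝ᵥ u = ((∑ i, ‖u i‖ ^ 2 : ℝ) : ℂ) := by
  push_cast
  simp only [dotProduct, Pi.star_apply]
  refine Finset.sum_congr rfl fun i _ => ?_
  rw [Complex.star_def, mul_comm, Complex.mul_conj']

lemma isom_sum {n m : Type*} [Fintype n] [Fintype m] [DecidableEq m]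
    (A : Matrix n m ℂ) (hA : Aᴴ * A = 1) (h : m → ℂ) :
    ∑ i, ‖A.mulVec h i‖ ^ 2 = ∑ j, ‖h j‖ ^ 2 := by
  have key : star (A.mulVec h) ⬝ᵥ (A.mulVec h) = star h ⬝ᵥ h := by
    rw [Matrix.star_mulVec, Matrix.dotProduct_mulVec, Matrix.vecMul_vecMul, hA,
      Matrix.vecMul_one]
  rw [dot_self_eq, dot_self_eq] at key
  exact_mod_cast key

lemma contract_sum {n m : Type*} [Fintype n] [Fintype m] [DecidableEq n] [DecidableEq m]
    (A : Matrix n m ℂ) (hA : Aᴴ * A = 1) (v : n → ℂ) :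
    ∑ j, ‖Aᴴ.mulVec v j‖ ^ 2 ≤ ∑ i, ‖v i‖ ^ 2 := by
  set B : Matrix n n ℂ := 1 - A * Aᴴ with hB
  have hP : A * Aᴴ * (A * Aᴴ) = A * Aᴴ := by
    rw [Matrix.mul_assoc A Aᴴ, ← Matrix.mul_assoc Aᴴ A Aᴴ, hA, Matrix.one_mul]
  have hBH : Bᴴ = B := by
    simp [hB, Matrix.conjTranspose_sub, Matrix.conjTranspose_mul]
  have hBB : B * B = B := by
    rw [hB, Matrix.sub_mul, Matrix.mul_sub, Matrix.mul_sub, Matrix.one_mul, Matrix.mul_one, hP]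
    simp
  have key : star (Aᴴ.mulVec v) ⬝ᵥ (Aᴴ.mulVec v) + star (B.mulVec v) ⬝ᵥ (B.mulVec v)
      = star v ⬝ᵥ v := by
    rw [Matrix.star_mulVec, Matrix.star_mulVec, Matrix.dotProduct_mulVec,
      Matrix.dotProduct_mulVec, Matrix.vecMul_vecMul, Matrix.vecMul_vecMul,
      Matrix.conjTranspose_conjTranspose, hBH, hBB, ← add_dotProduct,
      ← Matrix.vecMul_add, hB, add_sub_cancel, Matrix.vecMul_one]
  rw [dot_self_eq, dot_self_eq, dot_self_eq] at key
  have key' : (∑ j, ‖Aᴴ.mulVec v j‖ ^ 2) + (∑ i, ‖B.mulVec v i‖ ^ 2) = ∑ i, ‖v i‖ ^ 2 := by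
    exact_mod_cast key
  have hnn : 0 ≤ ∑ i, ‖B.mulVec v i‖ ^ 2 :=
    Finset.sum_nonneg fun i _ => sq_nonneg _
  linarith

lemma sum3_rot {α β γ : Type*} [Fintype α] [Fintype β] [Fintype γ]
    (f : α → β → γ → ℝ) :
    ∑ a, ∑ b, ∑ c, f a b c = ∑ b, ∑ c, ∑ a, f a b c := by
  have h1 : ∑ a, ∑ b, ∑ c, f a b c = ∑ p : α × β × γ, f p.1 p.2.1 p.2.2 := by
    simp [Fintype.sum_prod_type]
  have h2 : ∑ b, ∑ c, ∑ a, f a b c = ∑ p : β × γ × α, f p.2.2 p.1 p.2.1 := by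
    simp [Fintype.sum_prod_type]
  rw [h1, h2]
  exact Fintype.sum_equiv ⟨fun p => (p.2.1, p.2.2, p.1), fun p => (p.2.2, p.1, p.2.1),
    fun p => rfl, fun p => rfl⟩ _ _ (fun p => rfl)

lemma sum4_perm {α β γ δ : Type*} [Fintype α] [Fintype β] [Fintype γ] [Fintype δ]
    (f : α → β → γ → δ → ℝ) :
    ∑ a, ∑ b, ∑ c, ∑ d, f a b c d = ∑ d, ∑ b, ∑ c, ∑ a, f a b c d := by
  have h1 : ∑ a, ∑ b, ∑ c, ∑ d, f a b c d
      = ∑ p : α × β × γ × δ, f p.1 p.2.1 p.2.2.1 p.2.2.2 := by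
    simp [Fintype.sum_prod_type]
  have h2 : ∑ d, ∑ b, ∑ c, ∑ a, f a b c d
      = ∑ p : δ × β × γ × α, f p.2.2.2 p.2.1 p.2.2.1 p.1 := by
    simp [Fintype.sum_prod_type]
  rw [h1, h2]
  exact Fintype.sum_equiv ⟨fun p => (p.2.2.2, p.2.1, p.2.2.1, p.1),
    fun p => (p.2.2.2, p.2.1, p.2.2.1, p.1), fun p => rfl, fun p => rfl⟩ _ _ (fun p => rfl)

/-- tensor-network overlap bound: with isometries `V : M → Q⊗E`,
`W : M' → Q⊗E` and arbitrary pure states `φ⁰, φ¹`, the states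
`ψ⁰ = V†(|Φ⁺⟩_{RQ} ⊗ |φ⁰⟩_{M'EX})` and `ψ¹ = W†(|Φ⁺⟩_{RQ} ⊗ |φ¹⟩_{MEX})`
have overlap at most `1/2`. -/
theorem overlap_le_half (dM dM' dE dX : ℕ)
    (V : Matrix (Fin 2 × Fin dE) (Fin dM) ℂ) (W : Matrix (Fin 2 × Fin dE) (Fin dM') ℂ)
    (hV : Vᴴ * V = 1) (hW : Wᴴ * W = 1)
    (φ0 : Fin dM' × Fin dE × Fin dX → ℂ) (φ1 : Fin dM × Fin dE × Fin dX → ℂ)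
    (hφ0 : ∑ p, ‖φ0 p‖ ^ 2 = 1) (hφ1 : ∑ p, ‖φ1 p‖ ^ 2 = 1)
    (ψ0 ψ1 : Fin 2 × Fin dM × Fin dM' × Fin dX → ℂ)
    (hψ0 : ψ0 = fun p => ∑ q : Fin 2, ∑ e : Fin dE,
      (starRingEnd ℂ) (V (q, e) p.2.1) * (if p.1 = q then ((Real.sqrt 2 : ℝ) : ℂ)⁻¹ else 0) *
        φ0 (p.2.2.1, e, p.2.2.2))
    (hψ1 : ψ1 = fun p => ∑ q : Fin 2, ∑ e : Fin dE,
      (starRingEnd ℂ) (W (q, e) p.2.2.1) * (if p.1 = q then ((Real.sqrt 2 : ℝ) : ℂ)⁻¹ else 0) *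
        φ1 (p.2.1, e, p.2.2.2)) :
    ‖∑ p, (starRingEnd ℂ) (ψ0 p) * ψ1 p‖ ≤ 1 / 2 := by
  have h2 : (0:ℝ) ≤ 2 := by norm_num
  set c : ℂ := ((Real.sqrt 2 : ℝ) : ℂ)⁻¹ with hc
  have hcc : (starRingEnd ℂ) c * c = (2 : ℂ)⁻¹ := by
    rw [hc, map_inv₀, Complex.conj_ofReal, ← mul_inv, ← Complex.ofReal_mul,
      Real.mul_self_sqrt h2]
    norm_num
  have hψ0' : ψ0 = fun p => c * ∑ e, (starRingEnd ℂ) (V (p.1, e) p.2.1) *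
      φ0 (p.2.2.1, e, p.2.2.2) := by
    rw [hψ0]; funext p
    simp only [mul_ite, mul_zero, ite_mul, zero_mul, Finset.sum_ite_irrel,
      Finset.sum_const_zero, Finset.sum_ite_eq, Finset.mem_univ, if_true, Finset.mul_sum]
    exact Finset.sum_congr rfl fun e _ => by ring
  have hψ1' : ψ1 = fun p => c * ∑ e, (starRingEnd ℂ) (W (p.1, e) p.2.2.1) *
      φ1 (p.2.1, e, p.2.2.2) := by
    rw [hψ1]; funext p
    simp only [mul_ite, mul_zero, ite_mul, zero_mul, Finset.sum_ite_irrel,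
      Finset.sum_const_zero, Finset.sum_ite_eq, Finset.mem_univ, if_true, Finset.mul_sum]
    exact Finset.sum_congr rfl fun e _ => by ring
  set u : Fin 2 → Fin dE → Fin dE → Fin dX → ℂ :=
    fun r e e' x => ∑ m, V (r, e) m * φ1 (m, e', x) with hu
  set KH : Fin dM' → Fin dE → Fin dX → ℂ :=
    fun m' e x => ∑ r, ∑ e', (starRingEnd ℂ) (W (r, e') m') * u r e e' x with hKHdef
  have step1 : (∑ p, (starRingEnd ℂ) (ψ0 p) * ψ1 p)
      = (2:ℂ)⁻¹ * ∑ t : Fin dM' × Fin dE × Fin dX,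
          (starRingEnd ℂ) (φ0 t) * KH t.1 t.2.1 t.2.2 := by
    rw [hψ0', hψ1']
    have e1 : ∀ p : Fin 2 × Fin dM × Fin dM' × Fin dX,
        (starRingEnd ℂ) (c * ∑ e, (starRingEnd ℂ) (V (p.1, e) p.2.1) * φ0 (p.2.2.1, e, p.2.2.2)) *
          (c * ∑ e, (starRingEnd ℂ) (W (p.1, e) p.2.2.1) * φ1 (p.2.1, e, p.2.2.2))
        = ((starRingEnd ℂ) c * c) *
          ((starRingEnd ℂ) (∑ e, (starRingEnd ℂ) (V (p.1, e) p.2.1) * φ0 (p.2.2.1, e, p.2.2.2)) *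
            (∑ e, (starRingEnd ℂ) (W (p.1, e) p.2.2.1) * φ1 (p.2.1, e, p.2.2.2))) := by
      intro p; rw [_root_.map_mul]; ring
    simp only [e1]
    rw [← Finset.mul_sum, hcc]
    congr 1
    have flatL : (∑ p : Fin 2 × Fin dM × Fin dM' × Fin dX,
        (starRingEnd ℂ) (∑ e, (starRingEnd ℂ) (V (p.1, e) p.2.1) * φ0 (p.2.2.1, e, p.2.2.2)) *
          (∑ e, (starRingEnd ℂ) (W (p.1, e) p.2.2.1) * φ1 (p.2.1, e, p.2.2.2)))
        = ∑ s : Fin 2 × Fin dM × Fin dM' × Fin dX × Fin dE × Fin dE,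
            (V (s.1, s.2.2.2.2.1) s.2.1 * (starRingEnd ℂ) (φ0 (s.2.2.1, s.2.2.2.2.1, s.2.2.2.1))) *
              ((starRingEnd ℂ) (W (s.1, s.2.2.2.2.2) s.2.2.1) *
                φ1 (s.2.1, s.2.2.2.2.2, s.2.2.2.1)) := by
      simp only [map_sum, _root_.map_mul, Complex.conj_conj, Finset.sum_mul, Finset.mul_sum,
        Fintype.sum_prod_type]
      refine Finset.sum_congr rfl fun r _ => Finset.sum_congr rfl fun m _ =>
        Finset.sum_congr rfl fun m' _ => Finset.sum_congr rfl fun x _ => ?_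
      rw [Finset.sum_comm]
    have flatR : (∑ t : Fin dM' × Fin dE × Fin dX, (starRingEnd ℂ) (φ0 t) * KH t.1 t.2.1 t.2.2)
        = ∑ s : Fin dM' × Fin dE × Fin dX × Fin 2 × Fin dE × Fin dM,
            (starRingEnd ℂ) (φ0 (s.1, s.2.1, s.2.2.1)) *
              ((starRingEnd ℂ) (W (s.2.2.2.1, s.2.2.2.2.1) s.1) *
                (V (s.2.2.2.1, s.2.1) s.2.2.2.2.2 * φ1 (s.2.2.2.2.2, s.2.2.2.2.1, s.2.2.1))) := by
      simp only [hKHdef, hu, Finset.mul_sum, Fintype.sum_prod_type]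
    rw [flatL, flatR]
    exact Fintype.sum_equiv
      ⟨fun s => (s.2.2.1, s.2.2.2.2.1, s.2.2.2.1, s.1, s.2.2.2.2.2, s.2.1),
       fun s => (s.2.2.2.1, s.2.2.2.2.2, s.1, s.2.2.1, s.2.1, s.2.2.2.2.1),
       fun s => rfl, fun s => rfl⟩ _ _ (fun s => by simp only [Equiv.coe_fn_mk]; ring)
  have hKHbound : ∑ t : Fin dM' × Fin dE × Fin dX, ‖KH t.1 t.2.1 t.2.2‖ ^ 2 ≤ 1 := by
    have hut : ∀ (e' : Fin dE) (x : Fin dX),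
        ∑ r, ∑ e, ‖u r e e' x‖ ^ 2 = ∑ m, ‖φ1 (m, e', x)‖ ^ 2 := by
      intro e' x
      have h := isom_sum V hV (fun m => φ1 (m, e', x))
      simpa [Matrix.mulVec, dotProduct, Fintype.sum_prod_type, hu] using h
    have hKHle : ∀ (e : Fin dE) (x : Fin dX),
        ∑ m', ‖KH m' e x‖ ^ 2 ≤ ∑ r, ∑ e', ‖u r e e' x‖ ^ 2 := by
      intro e x
      have h := contract_sum W hW (fun i : Fin 2 × Fin dE => u i.1 e i.2 x)
      simpa [Matrix.mulVec, dotProduct, Fintype.sum_prod_type,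
        Matrix.conjTranspose_apply, hKHdef] using h
    calc ∑ t : Fin dM' × Fin dE × Fin dX, ‖KH t.1 t.2.1 t.2.2‖ ^ 2
        = ∑ m', ∑ e, ∑ x, ‖KH m' e x‖ ^ 2 := by simp [Fintype.sum_prod_type]
      _ = ∑ e, ∑ x, ∑ m', ‖KH m' e x‖ ^ 2 := sum3_rot _
      _ ≤ ∑ e, ∑ x, ∑ r, ∑ e', ‖u r e e' x‖ ^ 2 :=
          Finset.sum_le_sum fun e _ => Finset.sum_le_sum fun x _ => hKHle e x
      _ = ∑ e', ∑ x, ∑ r, ∑ e, ‖u r e e' x‖ ^ 2 :=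
          sum4_perm (fun e x r e' => ‖u r e e' x‖ ^ 2)
      _ = ∑ e', ∑ x, ∑ m, ‖φ1 (m, e', x)‖ ^ 2 :=
          Finset.sum_congr rfl fun e' _ => Finset.sum_congr rfl fun x _ => hut e' x
      _ = ∑ m, ∑ e', ∑ x, ‖φ1 (m, e', x)‖ ^ 2 :=
          (sum3_rot (fun m e' x => ‖φ1 (m, e', x)‖ ^ 2)).symm
      _ = 1 := by simpa [Fintype.sum_prod_type] using hφ1
  rw [step1]
  set G : EuclideanSpace ℂ (Fin dM' × Fin dE × Fin dX) := WithLp.toLp 2 (fun t => φ0 t) with hG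
  set H : EuclideanSpace ℂ (Fin dM' × Fin dE × Fin dX) :=
    WithLp.toLp 2 (fun t => KH t.1 t.2.1 t.2.2) with hH
  have hin : (inner ℂ G H) = ∑ t : Fin dM' × Fin dE × Fin dX,
      (starRingEnd ℂ) (φ0 t) * KH t.1 t.2.1 t.2.2 := by
    simp [PiLp.inner_apply, RCLike.inner_apply, hG, hH, mul_comm]
  have hGn : ‖G‖ ≤ 1 := by
    rw [EuclideanSpace.norm_eq]
    refine Real.sqrt_le_one.mpr ?_
    simpa [hG] using hφ0.le
  have hHn : ‖H‖ ≤ 1 := by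
    rw [EuclideanSpace.norm_eq]
    refine Real.sqrt_le_one.mpr ?_
    simpa [hH] using hKHbound
  rw [norm_mul, ← hin]
  have h1 : ‖(2:ℂ)⁻¹‖ = 1/2 := by rw [norm_inv, Complex.norm_two]; norm_num
  rw [h1]
  have h3 : ‖(inner ℂ G H)‖ ≤ 1 := by
    calc ‖(inner ℂ G H)‖ ≤ ‖G‖ * ‖H‖ := norm_inner_le_norm G H
      _ ≤ 1 := mul_le_one₀ hGn (norm_nonneg _) hHn
  nlinarith [norm_nonneg (inner ℂ G H)]
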